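/- Let r ≥ 0 and let M and M' be r-minimal finite quasimetric spaces. If φ : M → M' is an r-homotopy equivalence, then φ is an isometry (a distance-preserving bijection). -/

import Mathlib

open scoped ENNReal

class QuasiMetric (X : Type*) where
  qdist : X → X → ℝ≥0∞
  qdist_triangle : ∀ x y z : X, qdist x z ≤ qdist x y + qdist y z
  qdist_eq_zero_iff : ∀ x y : X, qdist x y = 0 ↔ x = y

open QuasiMetric

instance {X : Type*} [QuasiMetric X] (A : Set X) : QuasiMetric A where
  qdist a b := qdist a.1 b.1
  qdist_triangle a b c := qdist_triangle a.1 b.1 c.1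
  qdist_eq_zero_iff a b := (qdist_eq_zero_iff a.1 b.1).trans Subtype.coe_inj

/-- A map of quasimetric spaces is short (1-Lipschitz). -/
def IsShort {X Y : Type*} [QuasiMetric X] [QuasiMetric Y] (f : X → Y) : Prop :=
  ∀ x x' : X, qdist (f x) (f x') ≤ qdist x x'

/-- The distance `d(f,g) = sup_x d(f x, g x)` on maps. -/
noncomputable def mapDist {X Y : Type*} [QuasiMetric X] [QuasiMetric Y] (f g : X → Y) : ℝ≥0∞ :=
  ⨆ x : X, qdist (f x) (g x)

/-- Two short maps are `r`-homotopic if they are connected by a chain of short maps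
in which each consecutive pair is at distance `≤ r` in one direction or the other. -/
def MapHomotopic {X Y : Type*} [QuasiMetric X] [QuasiMetric Y] (r : ℝ) (f g : X → Y) : Prop :=
  Relation.ReflTransGen
    (fun u v : X → Y => IsShort u ∧ IsShort v ∧
      (mapDist u v ≤ ENNReal.ofReal r ∨ mapDist v u ≤ ENNReal.ofReal r)) f g

/-- `A ⊆ X` is an `r`-deformation retract of `X`. -/
def IsDefRetract {X : Type*} [QuasiMetric X] (r : ℝ) (A : Set X) : Prop :=
  ∃ ρ : X → A, IsShort ρ ∧ (∀ a : A, ρ (a : X) = a) ∧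
    MapHomotopic r (fun x => (ρ x : X)) id

/-- A quasimetric space is `r`-minimal if it has no proper `r`-deformation retract. -/
def RMinimal (r : ℝ) (X : Type*) [QuasiMetric X] : Prop :=
  ∀ A : Set X, IsDefRetract r A → A = Set.univ

/-- A distance-preserving bijection. -/
def IsIsometry {X Y : Type*} [QuasiMetric X] [QuasiMetric Y] (f : X → Y) : Prop :=
  Function.Bijective f ∧ ∀ x x' : X, qdist (f x) (f x') = qdist x x'

/-- Two quasimetric spaces are `r`-homotopy equivalent. -/
def RHomotopyEquivalent (r : ℝ) (X Y : Type*) [QuasiMetric X] [QuasiMetric Y] : Prop :=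
  ∃ f : X → Y, ∃ g : Y → X, IsShort f ∧ IsShort g ∧
    MapHomotopic r (g ∘ f) id ∧ MapHomotopic r (f ∘ g) id


section Aux

open Function

lemma exists_idem_iter {α : Type*} [Finite α] (f : α → α) :
    ∃ m, 0 < m ∧ f^[m] ∘ f^[m] = f^[m] := by
  obtain ⟨i, j, hne, hij⟩ := Finite.exists_ne_map_eq_of_infinite (fun n : ℕ => f^[n])
  wlog hlt : i < j generalizing i j
  · exact this j i hne.symm hij.symm (by omega)
  set p := j - i with hp
  have hp0 : 0 < p := by omega
  have hper : ∀ n, i ≤ n → f^[n + p] = f^[n] := by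
    intro n hn
    have e1 : n + p = (n - i) + j := by omega
    have e2 : (n - i) + i = n := by omega
    calc f^[n + p] = f^[n - i] ∘ f^[j] := by rw [e1, Function.iterate_add]
    _ = f^[n - i] ∘ f^[i] := by rw [← hij]
    _ = f^[n] := by rw [← Function.iterate_add, e2]
  have hmul : ∀ k n, i ≤ n → f^[n + k * p] = f^[n] := by
    intro k
    induction k with
    | zero => simp
    | succ k ih =>
      intro n hn
      have : n + (k+1) * p = (n + k * p) + p := by ring
      rw [this, hper _ (by omega), ih n hn]
  refine ⟨(i+1) * p, by positivity, ?_⟩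
  rw [← Function.iterate_add]
  exact hmul (i+1) ((i+1)*p) (by nlinarith)

variable {X Y Z : Type*} [QuasiMetric X] [QuasiMetric Y] [QuasiMetric Z]

lemma IsShort.comp {g : Y → Z} {f : X → Y} (hg : IsShort g) (hf : IsShort f) :
    IsShort (g ∘ f) := fun x x' => (hg _ _).trans (hf x x')

lemma isShort_id : IsShort (id : X → X) := fun _ _ => le_rfl

lemma IsShort.iterate {f : X → X} (hf : IsShort f) (n : ℕ) : IsShort f^[n] := by
  induction n with
  | zero => exact isShort_id
  | succ n ih => rw [Function.iterate_succ]; exact ih.comp hf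

lemma mapDist_comp_left_le {w : Y → Z} (hw : IsShort w) (u v : X → Y) :
    mapDist (w ∘ u) (w ∘ v) ≤ mapDist u v :=
  iSup_le fun x => (hw _ _).trans (le_iSup (fun x => qdist (u x) (v x)) x)

lemma mapDist_comp_right_le (w : X → Y) (u v : Y → Z) :
    mapDist (u ∘ w) (v ∘ w) ≤ mapDist u v :=
  iSup_le fun x => le_iSup (fun y => qdist (u y) (v y)) (w x)

lemma MapHomotopic.comp_left {r : ℝ} {f g : X → Y} {w : Y → Z} (hw : IsShort w)
    (h : MapHomotopic r f g) : MapHomotopic r (w ∘ f) (w ∘ g) := by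
  refine Relation.ReflTransGen.lift (fun u => w ∘ u) ?_ _ _ h
  rintro u v ⟨hu, hv, hd⟩
  exact ⟨hw.comp hu, hw.comp hv,
    hd.imp (le_trans (mapDist_comp_left_le hw u v)) (le_trans (mapDist_comp_left_le hw v u))⟩

lemma MapHomotopic.comp_right {r : ℝ} {f g : Y → Z} {w : X → Y} (hw : IsShort w)
    (h : MapHomotopic r f g) : MapHomotopic r (f ∘ w) (g ∘ w) := by
  refine Relation.ReflTransGen.lift (fun u => u ∘ w) ?_ _ _ h
  rintro u v ⟨hu, hv, hd⟩
  exact ⟨hu.comp hw, hv.comp hw,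
    hd.imp (le_trans (mapDist_comp_right_le w u v)) (le_trans (mapDist_comp_right_le w v u))⟩

lemma MapHomotopic.iterate {r : ℝ} {h : X → X} (hsh : IsShort h)
    (hh : MapHomotopic r h id) (n : ℕ) : MapHomotopic r h^[n] id := by
  induction n with
  | zero => exact Relation.ReflTransGen.refl
  | succ n ih =>
    have h1 : MapHomotopic r (h^[n] ∘ h) (h^[n] ∘ id) := hh.comp_left (hsh.iterate n)
    rw [Function.iterate_succ]
    exact h1.trans ih

/-- Key lemma: a short self-map `r`-homotopic to the identity on a finite
`r`-minimal quasimetric space is an isometry. -/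
lemma key_self {M : Type*} [QuasiMetric M] [Finite M] {r : ℝ} {h : M → M}
    (hsh : IsShort h) (hh : MapHomotopic r h id) (hmin : RMinimal r M) :
    Function.Bijective h ∧ ∀ x x' : M, qdist (h x) (h x') = qdist x x' := by
  obtain ⟨m, hm0, hidem⟩ := exists_idem_iter h
  set e := h^[m] with he
  have hesh : IsShort e := hsh.iterate m
  have heid : ∀ x, e (e x) = e x := fun x => congrFun hidem x
  -- the range of e is a deformation retract
  have hret : IsDefRetract r (Set.range e) := by
    refine ⟨fun x => ⟨e x, x, rfl⟩, ?_, ?_, ?_⟩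
    · intro x x'
      exact hesh x x'
    · rintro ⟨a, y, rfl⟩
      exact Subtype.ext (heid y)
    · exact hh.iterate hsh m
  have hsurj_e : Function.Surjective e := by
    have := hmin _ hret
    intro y
    have : y ∈ Set.range e := by rw [this]; trivial
    exact this
  have hbij_e : Function.Bijective e := Finite.surjective_iff_bijective.mp hsurj_e
  -- e is an idempotent bijection, hence the identity
  have he_id : ∀ x, e x = x := fun x => hbij_e.1 (heid x)
  obtain ⟨m', rfl⟩ : ∃ m', m = m' + 1 := ⟨m - 1, by omega⟩
  have hbij : Function.Bijective h := by
    rw [← Finite.injective_iff_bijective]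
    intro a b hab
    have : e a = e b := by
      rw [he, Function.iterate_succ_apply, Function.iterate_succ_apply, hab]
    rw [he_id a, he_id b] at this
    exact this
  refine ⟨hbij, fun x x' => le_antisymm (hsh x x') ?_⟩
  calc qdist x x' = qdist (e x) (e x') := by rw [he_id x, he_id x']
  _ = qdist (h^[m'] (h x)) (h^[m'] (h x')) := by rw [he, Function.iterate_succ_apply,
      Function.iterate_succ_apply]
  _ ≤ qdist (h x) (h x') := hsh.iterate m' _ _

end Aux

theorem stmt_3 {M M' : Type*} [QuasiMetric M] [QuasiMetric M'] [Finite M] [Finite M']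
    (r : ℝ) (hr : 0 ≤ r) (hM : RMinimal r M) (hM' : RMinimal r M')
    (φ : M → M') (hφ : IsShort φ)
    (hequiv : ∃ ψ : M' → M, IsShort ψ ∧ MapHomotopic r (ψ ∘ φ) id ∧ MapHomotopic r (φ ∘ ψ) id) :
    IsIsometry φ := by
  obtain ⟨ψ, hψ, h1, h2⟩ := hequiv
  obtain ⟨hbij1, hiso1⟩ := key_self (hψ.comp hφ) h1 hM
  obtain ⟨hbij2, _⟩ := key_self (hφ.comp hψ) h2 hM'
  have hinj : Function.Injective φ := fun x x' hxx' => hbij1.1 (by simp [Function.comp, hxx'])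
  have hsurj : Function.Surjective φ := fun y => by
    obtain ⟨y', hy'⟩ := hbij2.2 y
    exact ⟨ψ y', hy'⟩
  refine ⟨⟨hinj, hsurj⟩, fun x x' => le_antisymm (hφ x x') ?_⟩
  calc qdist x x' = qdist (ψ (φ x)) (ψ (φ x')) := (hiso1 x x').symm
  _ ≤ qdist (φ x) (φ x') := hψ _ _
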